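/- Optimism of the clipped optimistic empirical Bellman operator at the true optimal Q-function: suppose max_{s∈S}(MQ*)(s) − min_{s∈S}(MQ*)(s) ≤ H, and suppose the concentration condition |(P̂_{s,a} − P_{s,a})·(MQ*)| ≤ 2√(𝕍(P̂_{s,a}, MQ*)·U/n(s,a)) + 14HU/(3·n(s,a)) holds for all (s,a) ∈ S×A. Then Q*(s,a) ≤ (T̂Q*)(s,a) for all (s,a) ∈ S×A. -/
import Mathlib


open Finset

/-- Dot product of a probability vector `p` with a value vector `v`. -/
noncomputable def probDot {S : Type*} [Fintype S] (p v : S → ℝ) : ℝ :=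
  ∑ s, p s * v s

/-- Variance of `v` under the probability vector `p`. -/
noncomputable def probVar {S : Type*} [Fintype S] (p v : S → ℝ) : ℝ :=
  (∑ s, p s * (v s) ^ 2) - (probDot p v) ^ 2

/-- `(MQ)(s) = max_a Q(s,a)`. -/
noncomputable def maxOp {S A : Type*} [Fintype A] [Nonempty A] (Q : S → A → ℝ) (s : S) : ℝ :=
  Finset.univ.sup' Finset.univ_nonempty (Q s)

/-- `Clip_H(V)(s) = min (V s) (min_{s'} V s' + H)`. -/
noncomputable def clipOp {S : Type*} [Fintype S] [Nonempty S] (H : ℝ) (V : S → ℝ) (s : S) : ℝ :=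
  min (V s) (Finset.univ.inf' Finset.univ_nonempty V + H)

/-- The exploration bonus `b(s,a,V)`. -/
noncomputable def bonus {S A : Type*} [Fintype S] (Phat : S → A → S → ℝ)
    (cnt : S → A → ℝ) (U H : ℝ) (s : S) (a : A) (V : S → ℝ) : ℝ :=
  max (4 * Real.sqrt (probVar (Phat s a) V * U / cnt s a)) (32 * H * U / cnt s a)

/-- The clipped optimistic empirical Bellman operator `T̂`. -/
noncomputable def bellmanOp {S A : Type*} [Fintype S] [Fintype A] [Nonempty S] [Nonempty A]
    (γ H U : ℝ) (r : S → A → ℝ) (cnt : S → A → ℝ) (Phat : S → A → S → ℝ)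
    (Q : S → A → ℝ) : S → A → ℝ := fun s a =>
  r s a + γ * probDot (Phat s a) (clipOp H (maxOp Q))
    + γ * bonus Phat cnt U H s a (clipOp H (maxOp Q))

/-- Optimism of the clipped optimistic empirical Bellman operator at the true
optimal Q-function: under the span condition and the concentration condition,
`Q* ≤ T̂ Q*` pointwise. -/
theorem bellmanOp_optimism
    {S A : Type*} [Fintype S] [Fintype A] [Nonempty S] [Nonempty A]
    (γ H U : ℝ) (hγ₀ : 0 < γ) (hγ₁ : γ < 1) (hH : 0 ≤ H) (hU : 0 < U)
    (r : S → A → ℝ) (hr : ∀ s a, r s a ∈ Set.Icc (0 : ℝ) 1)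
    (cnt : S → A → ℝ) (hcnt : ∀ s a, 1 ≤ cnt s a)
    (Phat : S → A → S → ℝ)
    (hPnonneg : ∀ s a s', 0 ≤ Phat s a s')
    (hPle : ∀ s a s', Phat s a s' ≤ 1)
    (hPsum : ∀ s a, ∑ s', Phat s a s' = 1)
    (P : S → A → S → ℝ)
    (hPtrueNonneg : ∀ s a s', 0 ≤ P s a s')
    (hPtrueLe : ∀ s a s', P s a s' ≤ 1)
    (hPtrueSum : ∀ s a, ∑ s', P s a s' = 1)
    (Qstar : S → A → ℝ)
    (hBellman : ∀ s a, Qstar s a = r s a + γ * probDot (P s a) (maxOp Qstar))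
    (hspan : Finset.univ.sup' Finset.univ_nonempty (maxOp Qstar)
        - Finset.univ.inf' Finset.univ_nonempty (maxOp Qstar) ≤ H)
    (hconc : ∀ s a,
      |probDot (Phat s a) (maxOp Qstar) - probDot (P s a) (maxOp Qstar)|
        ≤ 2 * Real.sqrt (probVar (Phat s a) (maxOp Qstar) * U / cnt s a)
          + 14 * H * U / (3 * cnt s a)) :
    ∀ s a, Qstar s a ≤ bellmanOp γ H U r cnt Phat Qstar s a := by
  intro s a
  have hV : clipOp H (maxOp Qstar) = maxOp Qstar := by
    funext s'
    unfold clipOp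
    have h1 : maxOp Qstar s' ≤ Finset.univ.inf' Finset.univ_nonempty (maxOp Qstar) + H := by
      have h2 := Finset.le_sup' (maxOp Qstar) (Finset.mem_univ s')
      linarith
    exact min_eq_left h1
  have hcpos : (0:ℝ) < cnt s a := lt_of_lt_of_le one_pos (hcnt s a)
  set V := maxOp Qstar with hVdef
  set X := Real.sqrt (probVar (Phat s a) V * U / cnt s a) with hX
  have hXnn : 0 ≤ X := Real.sqrt_nonneg _
  have hHUn : 0 ≤ H * U / cnt s a := by positivity
  have hb : 2 * X + 14 * H * U / (3 * cnt s a) ≤ bonus Phat cnt U H s a V := by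
    unfold bonus
    rw [← hX]
    have hmax : 4 * X / 2 + (32 * H * U / cnt s a) / 2 ≤ max (4 * X) (32 * H * U / cnt s a) := by
      have := le_max_left (4*X) (32 * H * U / cnt s a)
      have := le_max_right (4*X) (32 * H * U / cnt s a)
      linarith
    have h143 : 14 * H * U / (3 * cnt s a) ≤ (32 * H * U / cnt s a) / 2 := by
      rw [div_div, div_le_div_iff₀ (by positivity) (by positivity)]
      nlinarith [mul_nonneg (mul_nonneg hH hU.le) hcpos.le]
    linarith
  have hconc' := hconc s a
  have hdiff : probDot (P s a) V - probDot (Phat s a) V ≤ bonus Phat cnt U H s a V := by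
    have h1 := (abs_le.mp hconc').1
    linarith
  unfold bellmanOp
  rw [hV, hBellman s a]
  nlinarith [hdiff, hγ₀.le]
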